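/- The countable Boolean group [ω]^{<ω} (finite subsets of ω under symmetric difference) endowed with the Bohr topology (the initial topology induced by all group homomorphisms into Z/2Z, where Z/2Z is discrete) is Hausdorff and has no non-trivial convergent sequences: every convergent sequence is eventually constant. -/

import Mathlib

open Filter

private lemma zmod2_ne_zero {a : ZMod 2} (h : a ≠ 0) : a = 1 := by
  revert h; revert a; decide

/-- Auxiliary recursive construction: a subsequence index together with the
accumulated union of supports so far. -/
private noncomputable def subseqAux (z : ℕ → (ℕ →₀ ZMod 2))
    (key : ∀ (F : Finset ℕ) (N : ℕ), ∃ k, N < k ∧ ∀ i ∈ F, (z k) i = 0) :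
    ℕ → ℕ × Finset ℕ
  | 0 => ((key ∅ 0).choose, (z (key ∅ 0).choose).support)
  | j + 1 =>
    let p := subseqAux z key j
    let k := (key p.2 p.1).choose
    (k, p.2 ∪ (z k).support)

private lemma subseqAux_lt (z : ℕ → (ℕ →₀ ZMod 2))
    (key : ∀ (F : Finset ℕ) (N : ℕ), ∃ k, N < k ∧ ∀ i ∈ F, (z k) i = 0) (j : ℕ) :
    (subseqAux z key j).1 < (subseqAux z key (j + 1)).1 :=
  (key (subseqAux z key j).2 (subseqAux z key j).1).choose_spec.1

private lemma subseqAux_zero (z : ℕ → (ℕ →₀ ZMod 2))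
    (key : ∀ (F : Finset ℕ) (N : ℕ), ∃ k, N < k ∧ ∀ i ∈ F, (z k) i = 0) (j : ℕ) :
    ∀ i ∈ (subseqAux z key j).2, (z (subseqAux z key (j + 1)).1) i = 0 :=
  (key (subseqAux z key j).2 (subseqAux z key j).1).choose_spec.2

private lemma subseqAux_support_subset (z : ℕ → (ℕ →₀ ZMod 2))
    (key : ∀ (F : Finset ℕ) (N : ℕ), ∃ k, N < k ∧ ∀ i ∈ F, (z k) i = 0) :
    ∀ j m, m ≤ j → (z (subseqAux z key m).1).support ⊆ (subseqAux z key j).2 := by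
  intro j
  induction j with
  | zero => intro m hm; interval_cases m; simp [subseqAux]
  | succ j ih =>
    intro m hm
    rcases Nat.le_succ_iff.mp hm with h | h
    · exact (ih m h).trans (by simp [subseqAux])
    · subst h; simp [subseqAux]

/-- Key combinatorial lemma: for any sequence of nonzero elements of the Boolean
group there is a character which is nonzero on infinitely many of them. -/
private lemma key_lemma (z : ℕ → (ℕ →₀ ZMod 2)) (hz : ∀ k, z k ≠ 0) :
    ∃ Φ : (ℕ →₀ ZMod 2) →+ ZMod 2, ∃ᶠ k in atTop, Φ (z k) ≠ 0 := by
  classical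
  by_cases h1 : ∃ i, ∃ᶠ k in atTop, (z k) i ≠ 0
  · obtain ⟨i, hi⟩ := h1
    exact ⟨Finsupp.applyAddHom i, hi⟩
  · -- every coordinate is eventually zero
    push_neg at h1
    have h2 : ∀ i, ∀ᶠ k in atTop, (z k) i = 0 := by
      intro i
      have := h1 i
      simpa using this
    have key : ∀ (F : Finset ℕ) (N : ℕ), ∃ k, N < k ∧ ∀ i ∈ F, (z k) i = 0 := by
      intro F N
      have hev : ∀ᶠ k in atTop, ∀ i ∈ F, (z k) i = 0 :=
        (Filter.eventually_all_finset F).2 fun i _ => h2 i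
      obtain ⟨k, hk1, hk2⟩ := (hev.and (Filter.eventually_gt_atTop N)).exists
      exact ⟨k, hk2, hk1⟩
    set g : ℕ → ℕ := fun j => (subseqAux z key j).1 with hg
    have hgmono : StrictMono g := strictMono_nat_of_lt_succ (subseqAux_lt z key)
    -- disjointness of supports along the subsequence
    have hdisj : ∀ m j, m < j → ∀ i ∈ (z (g m)).support, (z (g j)) i = 0 := by
      intro m j hmj i hi
      obtain ⟨j', rfl⟩ := Nat.exists_eq_add_of_lt hmj
      -- j = m + j' + 1
      exact subseqAux_zero z key (m + j')
        i (subseqAux_support_subset z key (m + j') m (Nat.le_add_right _ _) hi)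
    have hne : ∀ j, (z (g j)).support.Nonempty := fun j =>
      Finsupp.support_nonempty_iff.mpr (hz (g j))
    set idx : ℕ → ℕ := fun j => (z (g j)).support.min' (hne j) with hidx
    have hidxmem : ∀ j, idx j ∈ (z (g j)).support := fun j => Finset.min'_mem _ _
    set c : ℕ → ZMod 2 := fun i => if ∃ j, idx j = i then 1 else 0 with hc
    refine ⟨(Finsupp.linearCombination (ZMod 2) c).toAddMonoidHom, ?_⟩
    rw [Filter.frequently_atTop]
    intro N
    refine ⟨g N, hgmono.le_apply, ?_⟩
    have hval : (Finsupp.linearCombination (ZMod 2) c) (z (g N)) = 1 := by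
      rw [Finsupp.linearCombination_apply, Finsupp.sum]
      rw [Finset.sum_eq_single (idx N)]
      · have h1 : c (idx N) = 1 := by
          rw [hc]; exact if_pos ⟨N, rfl⟩
        have h2 : (z (g N)) (idx N) = 1 :=
          zmod2_ne_zero (Finsupp.mem_support_iff.mp (hidxmem N))
        rw [h1, h2]; simp
      · intro i hi hne'
        have hci : c i = 0 := by
          rw [hc]
          refine if_neg ?_
          rintro ⟨j, rfl⟩
          rcases lt_trichotomy j N with h | h | h
          · exact Finsupp.mem_support_iff.mp hi (hdisj j N h _ (hidxmem j))
          · exact hne' (by rw [h])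
          · exact Finsupp.mem_support_iff.mp (hidxmem j) (hdisj N j h _ hi)
        rw [hci]; simp
      · intro h; exact absurd (hidxmem N) h
    simp [hval]

private lemma open_preimage {τ : TopologicalSpace (ℕ →₀ ZMod 2)}
    (hτ : τ = ⨅ Φ : (ℕ →₀ ZMod 2) →+ ZMod 2,
      TopologicalSpace.induced (⇑Φ) ⊥)
    (Φ : (ℕ →₀ ZMod 2) →+ ZMod 2) (S : Set (ZMod 2)) :
    @IsOpen _ τ (⇑Φ ⁻¹' S) := by
  subst hτ
  have hle : (⨅ Φ : (ℕ →₀ ZMod 2) →+ ZMod 2,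
      TopologicalSpace.induced (⇑Φ) ⊥) ≤ TopologicalSpace.induced (⇑Φ) ⊥ :=
    iInf_le _ Φ
  exact hle _ ⟨S, trivial, rfl⟩

theorem stmt2 [τ : TopologicalSpace (ℕ →₀ ZMod 2)]
    (hτ : τ = ⨅ Φ : (ℕ →₀ ZMod 2) →+ ZMod 2,
      TopologicalSpace.induced (⇑Φ) ⊥) :
    T2Space (ℕ →₀ ZMod 2) ∧
      ∀ (x : ℕ → (ℕ →₀ ZMod 2)) (y : ℕ →₀ ZMod 2),
        Filter.Tendsto x Filter.atTop (nhds y) →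
          ∀ᶠ n in Filter.atTop, x n = y := by
  have hopen := open_preimage hτ
  constructor
  · refine ⟨fun x y hxy => ?_⟩
    have : ∃ i, x i ≠ y i := by
      by_contra h
      push_neg at h
      exact hxy (Finsupp.ext h)
    obtain ⟨i, hi⟩ := this
    refine ⟨⇑(Finsupp.applyAddHom i) ⁻¹' {x i}, ⇑(Finsupp.applyAddHom i) ⁻¹' {y i},
      hopen _ _, hopen _ _, rfl, rfl, ?_⟩
    rw [Set.disjoint_left]
    rintro a (ha : _ = _) (hb : _ = _)
    exact hi (ha ▸ hb)
  · intro x y hxy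
    by_contra h
    have hfreq : ∃ᶠ n in atTop, x n ≠ y := by
      rwa [← Filter.not_eventually]
    obtain ⟨φ, hφmono, hφ⟩ := Filter.extraction_of_frequently_atTop hfreq
    obtain ⟨Φ, hΦ⟩ := key_lemma (fun k => x (φ k) - y) (fun k => sub_ne_zero.mpr (hφ k))
    -- but eventually Φ (x n) = Φ y
    have hev : ∀ᶠ n in atTop, Φ (x n) = Φ y := by
      have hU : ⇑Φ ⁻¹' {Φ y} ∈ nhds y := (hopen Φ {Φ y}).mem_nhds rfl
      exact hxy hU
    obtain ⟨k, hk1, hk2⟩ :=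
      ((hφmono.tendsto_atTop.eventually hev).and_frequently hΦ).exists
    apply hk2
    have : Φ (x (φ k)) = Φ y := hk1
    simp [map_sub, this]
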